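/- Let a > 0 and let μ, τ be real numbers with |μ + τ| < 1 and |μ − τ| < 1. Define F(x) = μ + τ sin(2πx/a) and J(a) = ∫₀ᵃ 2F(x)/(1−F(x)²) dx. Then J(a) = [ 1/√((1−μ)² − τ²) − 1/√((1+μ)² − τ²) ] · a. In particular, J(a) is positive, zero, or negative according as μ is positive, zero, or negative. -/

import Mathlib

open Real Set

namespace Stmt16Aux
open intervalIntegral

lemma circ_out {w : ℂ} (hw : 1 < ‖w‖) :
    (∮ z in C((0:ℂ), 1), (z - w)⁻¹) = 0 := by
  apply Complex.circleIntegral_eq_zero_of_differentiable_on_off_countable zero_le_one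
    Set.countable_empty (s := ∅) (f := fun z => (z - w)⁻¹)
  · intro z hz
    apply ContinuousAt.continuousWithinAt
    apply ContinuousAt.inv₀ (by fun_prop)
    intro hzz
    have hz1 : ‖z‖ ≤ 1 := by simpa [Complex.dist_eq] using hz
    rw [sub_eq_zero] at hzz
    rw [hzz] at hz1
    linarith
  · intro z hz
    apply DifferentiableAt.inv (by fun_prop)
    intro hzz
    have hz1 : ‖z‖ < 1 := by simpa [Complex.dist_eq] using hz.1
    rw [sub_eq_zero] at hzz
    rw [hzz] at hz1
    linarith

lemma sin_integral (c d : ℝ) (h : |d| < c) :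
    (∫ θ in (0:ℝ)..(2*π), 1 / (c + d * Real.sin θ))
      = 2*π / Real.sqrt (c^2 - d^2) := by
  have hc : 0 < c := (abs_nonneg d).trans_lt h
  rcases eq_or_ne d 0 with rfl | hd
  · simp only [zero_mul, add_zero]
    rw [intervalIntegral.integral_const]
    have : Real.sqrt (c^2 - 0^2) = c := by
      rw [show c^2 - 0^2 = c^2 by ring, Real.sqrt_sq hc.le]
    rw [this]
    simp [smul_eq_mul]
    ring
  -- main case
  have hd2 : 0 < d^2 := by positivity
  have hpos : 0 < c^2 - d^2 := by nlinarith [sq_abs d, abs_nonneg d]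
  set s := Real.sqrt (c^2 - d^2) with hsdef
  have hs2 : s^2 = c^2 - d^2 := Real.sq_sqrt hpos.le
  have hs : 0 < s := Real.sqrt_pos.2 hpos
  have hsc : s < c := by nlinarith
  set w₁ : ℂ := Complex.I * ((s:ℂ) - c) / d with hw₁
  set w₂ : ℂ := -(Complex.I * ((s:ℂ) + c) / d) with hw₂
  have hdC : (d:ℂ) ≠ 0 := Complex.ofReal_ne_zero.2 hd
  have hsC : (s:ℂ) ≠ 0 := Complex.ofReal_ne_zero.2 hs.ne'
  have q : (s:ℂ)^2 = (c:ℂ)^2 - (d:ℂ)^2 := by exact_mod_cast congrArg (Complex.ofReal) hs2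
  have i2 : (Complex.I)^2 = -1 := Complex.I_sq
  have hmul : w₁ * w₂ = -1 := by
    rw [hw₁, hw₂]; field_simp
    linear_combination (-Complex.I^2)*q + (d:ℂ)^2*i2
  have hsum : w₁ + w₂ = -(2*Complex.I*(c:ℂ)/d) := by rw [hw₁, hw₂]; ring
  have hdiff : w₁ - w₂ = 2*Complex.I*(s:ℂ)/d := by rw [hw₁, hw₂]; ring
  have habs1 : ‖w₁‖ < 1 := by
    rw [hw₁, norm_div, norm_mul]
    simp only [Complex.norm_I, one_mul]
    rw [show ((s:ℂ) - c) = ((s - c : ℝ) : ℂ) by push_cast; ring]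
    simp only [Complex.norm_real, Real.norm_eq_abs]
    rw [div_lt_one (abs_pos.2 hd)]
    rw [abs_sub_comm, abs_of_pos (by linarith)]
    nlinarith [sq_abs d, abs_nonneg d]
  have habs2 : 1 < ‖w₂‖ := by
    rw [hw₂, norm_neg, norm_div, norm_mul]
    simp only [Complex.norm_I, one_mul]
    rw [show ((s:ℂ) + c) = ((s + c : ℝ) : ℂ) by push_cast; ring]
    simp only [Complex.norm_real, Real.norm_eq_abs]
    rw [lt_div_iff₀ (abs_pos.2 hd), one_mul]
    rw [abs_of_pos (show (0:ℝ) < s + c by linarith)]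
    linarith
  -- pointwise identity
  have hpt : ∀ θ : ℝ, ((1 / (c + d * Real.sin θ) : ℝ) : ℂ)
      = (-Complex.I/(s:ℂ)) * (Complex.exp ((θ:ℂ)*Complex.I) * Complex.I * (Complex.exp ((θ:ℂ)*Complex.I) - w₁)⁻¹
          - Complex.exp ((θ:ℂ)*Complex.I) * Complex.I * (Complex.exp ((θ:ℂ)*Complex.I) - w₂)⁻¹) := by
    intro θ
    set e := Complex.exp ((θ:ℂ)*Complex.I) with hedef
    have he : e ≠ 0 := Complex.exp_ne_zero _
    have habse : ‖e‖ = 1 := Complex.norm_exp_ofReal_mul_I θ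
    have hne₁ : e - w₁ ≠ 0 := sub_ne_zero.2 (by intro hh; rw [hh] at habse; exact (ne_of_lt habs1) habse)
    have hne₂ : e - w₂ ≠ 0 := sub_ne_zero.2 (by intro hh; rw [hh] at habse; exact (ne_of_gt habs2) habse)
    have hcast : ((1 / (c + d * Real.sin θ) : ℝ) : ℂ) = ((c:ℂ) + d * Complex.sin θ)⁻¹ := by
      push_cast [Complex.ofReal_sin]
      rw [one_div]
    rw [hcast, eq_comm]
    apply eq_inv_of_mul_eq_one_left
    rw [Complex.sin, show (-(θ:ℂ)) * Complex.I = -((θ:ℂ)*Complex.I) by ring, Complex.exp_neg, ← hedef]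
    have hsum' : (d:ℂ)*(w₁+w₂) = -(2*Complex.I*(c:ℂ)) := by
      rw [hsum]; field_simp
    have hP : (e - w₁)*(e - w₂) = ((d:ℂ)*e^2 + 2*Complex.I*c*e - d)/d := by
      field_simp
      linear_combination (d:ℂ)*hmul - e*hsum'
    have hQ : (d:ℂ)*e^2 + 2*Complex.I*c*e - d ≠ 0 := by
      intro hz
      apply mul_ne_zero hne₁ hne₂
      rw [hP, hz, zero_div]
    rw [← mul_sub, inv_sub_inv hne₁ hne₂, show (e-w₂)-(e-w₁) = w₁ - w₂ by ring, hdiff, hP]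
    field_simp
    rw [neg_eq_iff_eq_neg, div_eq_iff (by intro hz; apply hQ; linear_combination hz)]
    linear_combination (2*Complex.I*e*(c:ℂ) + (d:ℂ)*(1-e^2)*(Complex.I^2-1)) * i2
  -- integrability of the two circle pieces
  have hcont : ∀ w : ℂ, ‖w‖ ≠ 1 →
      Continuous (fun θ : ℝ => Complex.exp ((θ:ℂ)*Complex.I) * Complex.I * (Complex.exp ((θ:ℂ)*Complex.I) - w)⁻¹) := by
    intro w hw
    have hexp : Continuous (fun θ : ℝ => Complex.exp ((θ:ℂ)*Complex.I)) := by fun_prop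
    refine (hexp.mul continuous_const).mul ((hexp.sub continuous_const).inv₀ ?_)
    intro θ
    intro hz
    apply hw
    simp only [Pi.sub_apply, sub_eq_zero] at hz
    rw [← hz]
    exact Complex.norm_exp_ofReal_mul_I θ
  have hi₁ := ((hcont w₁ (ne_of_lt habs1)).intervalIntegrable (μ := MeasureTheory.volume) (0:ℝ) (2*π))
  have hi₂ := ((hcont w₂ (ne_of_gt habs2)).intervalIntegrable (μ := MeasureTheory.volume) (0:ℝ) (2*π))
  -- circle integrals
  have e₁ : (∫ θ in (0:ℝ)..(2*π), Complex.exp ((θ:ℂ)*Complex.I) * Complex.I * (Complex.exp ((θ:ℂ)*Complex.I) - w₁)⁻¹)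
      = 2 * π * Complex.I := by
    rw [show (∫ θ in (0:ℝ)..(2*π), Complex.exp ((θ:ℂ)*Complex.I) * Complex.I * (Complex.exp ((θ:ℂ)*Complex.I) - w₁)⁻¹)
        = (∮ z in C((0:ℂ),1), (z - w₁)⁻¹) by
      simp [circleIntegral, deriv_circleMap, circleMap, smul_eq_mul]]
    exact circleIntegral.integral_sub_inv_of_mem_ball (by simpa [Complex.dist_eq] using habs1)
  have e₂ : (∫ θ in (0:ℝ)..(2*π), Complex.exp ((θ:ℂ)*Complex.I) * Complex.I * (Complex.exp ((θ:ℂ)*Complex.I) - w₂)⁻¹)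
      = 0 := by
    rw [show (∫ θ in (0:ℝ)..(2*π), Complex.exp ((θ:ℂ)*Complex.I) * Complex.I * (Complex.exp ((θ:ℂ)*Complex.I) - w₂)⁻¹)
        = (∮ z in C((0:ℂ),1), (z - w₂)⁻¹) by
      simp [circleIntegral, deriv_circleMap, circleMap, smul_eq_mul]]
    exact circ_out habs2
  have hcplx : (∫ θ in (0:ℝ)..(2*π), ((1 / (c + d * Real.sin θ) : ℝ) : ℂ)) = 2*π/(s:ℂ) := by
    calc (∫ θ in (0:ℝ)..(2*π), ((1 / (c + d * Real.sin θ) : ℝ) : ℂ))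
        = ∫ θ in (0:ℝ)..(2*π), (-Complex.I/(s:ℂ)) * (Complex.exp ((θ:ℂ)*Complex.I) * Complex.I * (Complex.exp ((θ:ℂ)*Complex.I) - w₁)⁻¹
          - Complex.exp ((θ:ℂ)*Complex.I) * Complex.I * (Complex.exp ((θ:ℂ)*Complex.I) - w₂)⁻¹) := by
          simp_rw [hpt]
      _ = (-Complex.I/(s:ℂ)) * ((∫ θ in (0:ℝ)..(2*π), Complex.exp ((θ:ℂ)*Complex.I) * Complex.I * (Complex.exp ((θ:ℂ)*Complex.I) - w₁)⁻¹)
          - (∫ θ in (0:ℝ)..(2*π), Complex.exp ((θ:ℂ)*Complex.I) * Complex.I * (Complex.exp ((θ:ℂ)*Complex.I) - w₂)⁻¹)) := by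
          rw [intervalIntegral.integral_const_mul, intervalIntegral.integral_sub hi₁ hi₂]
      _ = 2*π/(s:ℂ) := by
          rw [e₁, e₂, sub_zero]
          field_simp
          linear_combination -i2
  have hre := intervalIntegral.integral_ofReal (f := fun θ => 1 / (c + d * Real.sin θ)) (a := (0:ℝ)) (b := 2*π) (μ := MeasureTheory.volume)
  rw [hre] at hcplx
  exact_mod_cast hcplx

end Stmt16Aux

open Stmt16Aux in

/-- For the oscillating force field `F(x) = μ + τ sin(2πx/a)` with `|μ+τ| < 1`
and `|μ-τ| < 1`, `J(a) = ∫₀ᵃ 2F/(1-F²) = [1/√((1-μ)²-τ²) - 1/√((1+μ)²-τ²)]·a`,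
whose sign is the sign of `μ`. -/
theorem stmt_16 (a μ τ : ℝ) (ha : 0 < a)
    (h1 : |μ + τ| < 1) (h2 : |μ - τ| < 1)
    (F : ℝ → ℝ) (Ja : ℝ)
    (hF : ∀ x, F x = μ + τ * Real.sin (2 * Real.pi * x / a))
    (hJa : Ja = ∫ x in (0:ℝ)..a, 2 * F x / (1 - (F x) ^ 2)) :
    Ja = (1 / Real.sqrt ((1 - μ) ^ 2 - τ ^ 2)
          - 1 / Real.sqrt ((1 + μ) ^ 2 - τ ^ 2)) * a ∧
    (0 < Ja ↔ 0 < μ) ∧ (Ja = 0 ↔ μ = 0) ∧ (Ja < 0 ↔ μ < 0) := by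
  have hπ : (0:ℝ) < π := Real.pi_pos
  obtain ⟨h1a, h1b⟩ := abs_lt.1 h1
  obtain ⟨h2a, h2b⟩ := abs_lt.1 h2
  have habs : |μ| + |τ| < 1 := by
    rcases abs_cases μ with ⟨hm, _⟩ | ⟨hm, _⟩ <;> rcases abs_cases τ with ⟨ht, _⟩ | ⟨ht, _⟩ <;>
      rw [hm, ht] <;> linarith
  have hc₁ : |(-τ)| < 1 - μ := by
    rw [abs_neg]
    have := le_abs_self μ
    have := abs_nonneg τ
    linarith [le_abs_self μ]
  have hc₂ : |τ| < 1 + μ := by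
    have := neg_abs_le μ
    linarith
  -- positivity of F-related denominators
  have h1F : ∀ x, (0:ℝ) < 1 - F x := by
    intro x
    rw [hF]
    have hs1 : -1 ≤ Real.sin (2*π*x/a) := Real.neg_one_le_sin _
    have hs2' : Real.sin (2*π*x/a) ≤ 1 := Real.sin_le_one _
    have h1 : |τ * Real.sin (2*π*x/a)| ≤ |τ| := by
      rw [abs_mul]; exact mul_le_of_le_one_right (abs_nonneg τ) (Real.abs_sin_le_one _)
    have := (abs_le.1 h1).2
    linarith [le_abs_self μ]
  have h2F : ∀ x, (0:ℝ) < 1 + F x := by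
    intro x
    rw [hF]
    have h1 : |τ * Real.sin (2*π*x/a)| ≤ |τ| := by
      rw [abs_mul]; exact mul_le_of_le_one_right (abs_nonneg τ) (Real.abs_sin_le_one _)
    have := (abs_le.1 h1).1
    linarith [neg_abs_le μ]
  have hFc : Continuous F := by
    have : F = fun x => μ + τ * Real.sin (2 * π * x / a) := funext hF
    rw [this]; fun_prop
  have cont₁ : Continuous (fun x => 1/(1 - F x)) :=
    continuous_const.div (continuous_const.sub hFc) (fun x => (h1F x).ne')
  have cont₂ : Continuous (fun x => 1/(1 + F x)) :=
    continuous_const.div (continuous_const.add hFc) (fun x => (h2F x).ne')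
  have hsplit : ∀ x, 2 * F x / (1 - (F x)^2) = 1/(1 - F x) - 1/(1 + F x) := by
    intro x
    have hx1 := (h1F x).ne'
    have hx2 := (h2F x).ne'
    rw [div_sub_div _ _ hx1 hx2,
      show (1:ℝ)*(1+F x) - (1-F x)*1 = 2*F x by ring,
      show ((1:ℝ)-F x)*(1+F x) = 1 - F x^2 by ring]
  have hcne : 2*π/a ≠ 0 := by positivity
  -- computing the two integrals
  have comp : ∀ b t : ℝ, |t| < b →
      (∫ x in (0:ℝ)..a, 1/(b + t * Real.sin (2*π*x/a)))
        = (2*π/a)⁻¹ * (2*π / Real.sqrt (b^2 - t^2)) := by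
    intro b t hbt
    have h0 : (2*π/a) * 0 = 0 := by ring
    have h2π : (2*π/a) * a = 2*π := by field_simp
    have := intervalIntegral.integral_comp_mul_left
      (f := fun θ => 1/(b + t * Real.sin θ)) (a := (0:ℝ)) (b := a) (c := 2*π/a) hcne
    rw [h0, h2π, sin_integral b t hbt] at this
    simp only [smul_eq_mul] at this
    rw [← this]
    apply intervalIntegral.integral_congr
    intro x _
    simp only []
    rw [show 2*π*x/a = 2*π/a*x by ring]
  have key₁ : (∫ x in (0:ℝ)..a, 1/(1 - F x))
      = (2*π/a)⁻¹ * (2*π / Real.sqrt ((1-μ)^2 - τ^2)) := by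
    have := comp (1-μ) (-τ) hc₁
    rw [show ((-τ:ℝ))^2 = τ^2 by ring] at this
    rw [← this]
    apply intervalIntegral.integral_congr
    intro x _
    simp only []
    rw [hF x]
    ring_nf
  have key₂ : (∫ x in (0:ℝ)..a, 1/(1 + F x))
      = (2*π/a)⁻¹ * (2*π / Real.sqrt ((1+μ)^2 - τ^2)) := by
    have := comp (1+μ) τ hc₂
    rw [← this]
    apply intervalIntegral.integral_congr
    intro x _
    simp only []
    rw [hF x]
    ring_nf
  have hs₁pos : (0:ℝ) < (1-μ)^2 - τ^2 := by nlinarith [abs_nonneg τ, le_abs_self τ, neg_abs_le τ, le_abs_self μ, neg_abs_le μ]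
  have hs₂pos : (0:ℝ) < (1+μ)^2 - τ^2 := by nlinarith [abs_nonneg τ, le_abs_self τ, neg_abs_le τ, le_abs_self μ, neg_abs_le μ]
  set s₁ := Real.sqrt ((1-μ)^2 - τ^2) with hs₁def
  set s₂ := Real.sqrt ((1+μ)^2 - τ^2) with hs₂def
  have hs₁ : 0 < s₁ := Real.sqrt_pos.2 hs₁pos
  have hs₂ : 0 < s₂ := Real.sqrt_pos.2 hs₂pos
  have hJval : Ja = (1/s₁ - 1/s₂) * a := by
    rw [hJa]
    rw [intervalIntegral.integral_congr (g := fun x => 1/(1 - F x) - 1/(1 + F x))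
      (fun x _ => hsplit x)]
    rw [intervalIntegral.integral_sub (cont₁.intervalIntegrable _ _) (cont₂.intervalIntegrable _ _)]
    rw [key₁, key₂]
    field_simp
  have hppos : 0 < μ → 0 < Ja := by
    intro hμ
    have hlt : s₁ < s₂ := Real.sqrt_lt_sqrt hs₁pos.le (by nlinarith)
    have : 1/s₂ < 1/s₁ := one_div_lt_one_div_of_lt hs₁ hlt
    rw [hJval]
    exact mul_pos (by linarith) ha
  have hpzero : μ = 0 → Ja = 0 := by
    intro hμ
    rw [hJval, hs₁def, hs₂def, hμ]
    norm_num
  have hpneg : μ < 0 → Ja < 0 := by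
    intro hμ
    have hlt : s₂ < s₁ := Real.sqrt_lt_sqrt hs₂pos.le (by nlinarith)
    have : 1/s₁ < 1/s₂ := one_div_lt_one_div_of_lt hs₂ hlt
    rw [hJval]
    exact mul_neg_of_neg_of_pos (by linarith) ha
  refine ⟨hJval, ⟨fun h => ?_, hppos⟩, ⟨fun h => ?_, hpzero⟩, ⟨fun h => ?_, hpneg⟩⟩
  · rcases lt_trichotomy μ 0 with hm|hm|hm
    · linarith [hpneg hm]
    · linarith [hpzero hm]
    · exact hm
  · rcases lt_trichotomy μ 0 with hm|hm|hm
    · linarith [hpneg hm]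
    · exact hm
    · linarith [hppos hm]
  · rcases lt_trichotomy μ 0 with hm|hm|hm
    · exact hm
    · linarith [hpzero hm]
    · linarith [hppos hm]
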